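/- Let N ≥ 1 and define φ : ℝ × ℝ → ℂ by φ(a,b) = −i·e^{−π(a²+b²)}·(a + i b). Let τ₁, …, τ_N ∈ ℂ with τ_j = u_j + i v_j and v_j > 0, and let m₁, …, m_N, n₁, …, n_N ∈ ℝ with (m_j, n_j) ≠ (0,0) for every j. Then for every s ∈ ℂ with Re(s) > −2, the integrals below converge and ∏_{j=1}^N ∫_0^∞ φ( (m_j − n_j u_j)·t/√v_j , n_j·√v_j·t ) · t^{1+s} dt/t = Γ(1 + s/2)^N · (2 i π^{1+s/2})^{−N} · ( ∏_{j=1}^N v_j^{(1+s)/2} ) / ( ∏_{j=1}^N (m_j − n_j τ_j) · ∏_{j=1}^N |m_j − n_j τ_j|^s ). -/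

import Mathlib

open MeasureTheory Set Complex

lemma cpow_sq_aux {x : ℝ} (hx : 0 < x) (w : ℂ) : (((x^2 : ℝ)):ℂ)^w = (x:ℂ)^(2*w) := by
  have hlog : Complex.log (x:ℂ) = (Real.log x : ℂ) := (Complex.ofReal_log hx.le).symm
  rw [Complex.ofReal_pow, ← Complex.cpow_natCast (x:ℂ) 2, ← Complex.cpow_mul]
  · norm_num
  · simp [hlog, Real.pi_pos]
  · simp [hlog, Real.pi_pos.le]

lemma int1 {b : ℝ} (hb : 0 < b) {a : ℂ} (ha : 0 < a.re) :
    ∫ t in Ioi (0:ℝ), (t:ℂ)^(a-1) * Complex.exp (-(b * t^2)) =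
      (1/2) * (1/(b:ℂ))^(a/2) * Complex.Gamma (a/2) := by
  have ha2 : 0 < (a/2).re := by
    rw [Complex.div_re]; simp; positivity
  have base := Complex.integral_cpow_mul_exp_neg_mul_Ioi ha2 hb
  have sub := integral_comp_rpow_Ioi_of_pos
    (g := fun y : ℝ => (y:ℂ)^(a/2-1) * Complex.exp (-(b*y))) two_pos
  calc ∫ t in Ioi (0:ℝ), (t:ℂ)^(a-1) * Complex.exp (-(b * t^2))
      = ∫ x in Ioi (0:ℝ), ((1/2 : ℂ)) *
          ((2 * x^((2:ℝ)-1)) •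
            (fun y : ℝ => (y:ℂ)^(a/2-1) * Complex.exp (-(b*y))) (x^(2:ℝ))) := by
        refine setIntegral_congr_fun measurableSet_Ioi (fun x hx => ?_)
        have hx : (0:ℝ) < x := hx
        have hx0 : (x:ℂ) ≠ 0 := Complex.ofReal_ne_zero.mpr hx.ne'
        simp only
        have h2 : x ^ (2:ℝ) = x ^ 2 := by
          rw [show (2:ℝ) = ((2:ℕ):ℝ) by norm_num, Real.rpow_natCast]
        have h1 : x ^ ((2:ℝ)-1) = x := by norm_num
        rw [h2, h1, cpow_sq_aux hx, real_smul]
        have h3 : (a-1) = 1 + (2*(a/2-1)) := by ring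
        rw [h3, Complex.cpow_add _ _ hx0, Complex.cpow_one]
        push_cast
        ring
    _ = (1/2 : ℂ) * ∫ x in Ioi (0:ℝ),
          ((2 * x^((2:ℝ)-1)) •
            (fun y : ℝ => (y:ℂ)^(a/2-1) * Complex.exp (-(b*y))) (x^(2:ℝ))) := by
        rw [integral_const_mul]
    _ = (1/2) * (1/(b:ℂ))^(a/2) * Complex.Gamma (a/2) := by
        rw [sub, base, mul_assoc]

lemma key (φ : ℝ × ℝ → ℂ)
    (hφ : ∀ a b : ℝ,
      φ (a, b) = -Complex.I * Complex.exp (-Real.pi * (a ^ 2 + b ^ 2)) * (a + Complex.I * b))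
    (A B : ℝ) (hAB : 0 < A^2 + B^2) (s : ℂ) (hs : -2 < s.re) :
    IntegrableOn (fun t : ℝ => φ (A*t, B*t) * (t:ℂ)^(1+s) / (t:ℂ)) (Ioi 0) ∧
    ∫ t in Ioi (0:ℝ), φ (A*t, B*t) * (t:ℂ)^(1+s) / (t:ℂ) =
      (-Complex.I * ((A:ℂ) + Complex.I * B)) *
        ((1/2) * (1/((Real.pi*(A^2+B^2) : ℝ)):ℂ)^((2+s)/2) * Complex.Gamma ((2+s)/2)) := by
  set c : ℝ := Real.pi * (A^2 + B^2) with hc_def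
  have hc : 0 < c := by positivity
  have heq : ∀ t ∈ Ioi (0:ℝ), φ (A*t, B*t) * (t:ℂ)^(1+s) / (t:ℂ) =
      (-Complex.I * ((A:ℂ) + Complex.I * B)) * ((t:ℂ)^(1+s) * Complex.exp (-(c * t^2))) := by
    intro t ht
    have ht : (0:ℝ) < t := ht
    have ht0 : (t:ℂ) ≠ 0 := Complex.ofReal_ne_zero.mpr ht.ne'
    rw [hφ]
    have harg : -(Real.pi:ℂ) * (((A*t:ℝ):ℂ) ^ 2 + ((B*t:ℝ):ℂ) ^ 2) = -((c:ℝ) * (t:ℂ)^2) := by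
      rw [hc_def]; push_cast; ring
    rw [harg]
    push_cast
    field_simp
  have hmeas : AEStronglyMeasurable
      (fun t : ℝ => (-Complex.I * ((A:ℂ) + Complex.I * B)) *
        ((t:ℂ)^(1+s) * Complex.exp (-(c * t^2)))) (volume.restrict (Ioi 0)) := by
    apply Measurable.aestronglyMeasurable
    fun_prop
  have hint : IntegrableOn
      (fun t : ℝ => (-Complex.I * ((A:ℂ) + Complex.I * B)) *
        ((t:ℂ)^(1+s) * Complex.exp (-(c * t^2)))) (Ioi 0) := by
    apply Integrable.mono' ((integrableOn_rpow_mul_exp_neg_mul_sq hc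
      (s := 1 + s.re) (by linarith)).const_mul
        ‖(-Complex.I * ((A:ℂ) + Complex.I * B))‖) hmeas
    rw [ae_restrict_iff' measurableSet_Ioi]
    filter_upwards with t ht
    have ht : (0:ℝ) < t := ht
    have h1 : ‖(t:ℂ)^(1+s)‖ = t ^ (1+s.re) := by
      rw [Complex.norm_cpow_eq_rpow_re_of_pos ht]
      norm_num
    have h2 : ‖Complex.exp (-((c:ℝ) * (t:ℂ)^2))‖ = Real.exp (-(c * t^2)) := by
      rw [Complex.norm_exp]
      congr 1
      have : ((c:ℝ) * (t:ℂ)^2) = (((c * t^2 : ℝ)):ℂ) := by push_cast; ring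
      rw [this, ← Complex.ofReal_neg, Complex.ofReal_re]
    simp only [norm_mul, norm_neg, map_mul, h1, h2, neg_mul, le_refl]
  constructor
  · exact (hint.congr_fun (fun t ht => (heq t ht).symm) measurableSet_Ioi)
  · rw [setIntegral_congr_fun measurableSet_Ioi heq, integral_const_mul]
    have := int1 hc (a := 2 + s) (by simp [Complex.add_re]; linarith)
    rw [show (1+s) = (2+s) - 1 by ring, this]

lemma keyval (mj nj uj vj : ℝ) (hv : 0 < vj) (hmn : ¬(mj = 0 ∧ nj = 0)) (s : ℂ) :
    (-Complex.I * ((((mj - nj*uj)/Real.sqrt vj : ℝ):ℂ) +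
        Complex.I * ((nj * Real.sqrt vj : ℝ):ℂ))) *
      ((1/2) * (1/((Real.pi*(((mj - nj*uj)/Real.sqrt vj)^2 + (nj * Real.sqrt vj)^2) : ℝ)):ℂ)^((2+s)/2)
        * Complex.Gamma ((2+s)/2))
    = Complex.Gamma (1+s/2) * (2*Complex.I*(Real.pi:ℂ)^(1+s/2))⁻¹ * (vj:ℂ)^((1+s)/2)
      / (((mj:ℂ) - (nj:ℂ)*((uj:ℂ)+Complex.I*(vj:ℂ)))
         * ((‖(mj:ℂ) - (nj:ℂ)*((uj:ℂ)+Complex.I*(vj:ℂ))‖ : ℝ):ℂ)^s) := by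
  rw [show (1:ℂ)/((Real.pi*(((mj - nj*uj)/Real.sqrt vj)^2 + (nj * Real.sqrt vj)^2) : ℝ):ℂ)
      = ((1/(Real.pi*(((mj - nj*uj)/Real.sqrt vj)^2 + (nj * Real.sqrt vj)^2)) : ℝ):ℂ) by
    push_cast; ring]
  rw [show (2+s)/2 = 1+s/2 by ring]
  set a : ℝ := mj - nj*uj with ha_def
  set b : ℝ := nj*vj with hb_def
  set sq : ℝ := Real.sqrt vj with hsq_def
  have hsq : 0 < sq := Real.sqrt_pos.mpr hv
  have hsq2 : sq^2 = vj := Real.sq_sqrt hv.le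
  set z : ℂ := (mj:ℂ) - (nj:ℂ)*((uj:ℂ)+Complex.I*(vj:ℂ)) with hz_def
  have hz : z = (a:ℂ) - Complex.I*(b:ℂ) := by rw [hz_def, ha_def, hb_def]; push_cast; ring
  set R : ℝ := ‖z‖ with hR_def
  have hz0 : z ≠ 0 := by
    intro h
    rw [hz] at h
    have hre : a = 0 := by
      have := congrArg Complex.re h; simpa using this
    have him : b = 0 := by
      have := congrArg Complex.im h; simpa using this
    have hnj : nj = 0 := by
      rcases mul_eq_zero.mp him with h' | h'
      · exact h'
      · exact absurd h' hv.ne'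
    exact hmn ⟨by simpa [ha_def, hnj] using hre, hnj⟩
  have hR : 0 < R := norm_pos_iff.mpr hz0
  have hR2 : R^2 = a^2 + b^2 := by
    rw [hR_def, Complex.sq_norm, Complex.normSq_apply, hz]
    simp [Complex.sub_re, Complex.sub_im, Complex.mul_re, Complex.mul_im]
    ring
  have hABval : ((mj - nj*uj)/sq)^2 + (nj * sq)^2 = (a^2 + b^2)/vj := by
    rw [← ha_def, div_pow, hsq2, mul_pow, hsq2, hb_def]
    field_simp
  have hreal : (1/(Real.pi*(((mj - nj*uj)/sq)^2 + (nj * sq)^2)) : ℝ)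
      = (1/Real.pi) * ((1/R^2) * vj) := by
    rw [hABval, hR2]
    have h1 : (0:ℝ) < a^2+b^2 := by rw [← hR2]; positivity
    field_simp
  rw [hreal]
  rw [show ((1/Real.pi * (1/R^2 * vj) : ℝ) : ℂ) = ((1/Real.pi:ℝ):ℂ) * (((1/R^2 * vj :ℝ)):ℂ) by
      push_cast; ring,
    mul_cpow_ofReal_nonneg (by positivity) (by positivity),
    show (((1/R^2 * vj :ℝ)):ℂ) = (((1/R^2:ℝ)):ℂ) * ((vj:ℝ):ℂ) by push_cast; ring,
    mul_cpow_ofReal_nonneg (by positivity) hv.le]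
  have hargpi : ((Real.pi:ℝ):ℂ).arg ≠ Real.pi := by
    rw [Complex.arg_ofReal_of_nonneg Real.pi_pos.le]
    exact Real.pi_pos.ne
  have hargR : (((R^2:ℝ)):ℂ).arg ≠ Real.pi := by
    rw [Complex.arg_ofReal_of_nonneg (by positivity)]
    exact Real.pi_pos.ne
  have hpi : (((1/Real.pi : ℝ)):ℂ)^(1+s/2) = (((Real.pi:ℝ):ℂ)^(1+s/2))⁻¹ := by
    rw [show (((1/Real.pi : ℝ)):ℂ) = (((Real.pi:ℝ):ℂ))⁻¹ by push_cast; ring]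
    exact Complex.inv_cpow _ _ hargpi
  have hRr : (((1/R^2 : ℝ)):ℂ)^(1+s/2) = ((R:ℂ)^2 * (R:ℂ)^s)⁻¹ := by
    rw [show (((1/R^2 : ℝ)):ℂ) = ((((R^2:ℝ)):ℂ))⁻¹ by push_cast; ring,
      Complex.inv_cpow _ _ hargR, cpow_sq_aux hR, show 2*(1+s/2) = ((2:ℕ):ℂ)+s by push_cast; ring,
      Complex.cpow_add _ _ (Complex.ofReal_ne_zero.mpr hR.ne'), Complex.cpow_natCast]
  have hvsplit : ((vj:ℝ):ℂ)^(1+s/2) = (vj:ℂ)^((1+s)/2) * (sq:ℂ) := by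
    rw [show (1+s/2 : ℂ) = (1+s)/2 + ((1/2:ℝ):ℂ) by push_cast; ring,
      Complex.cpow_add _ _ (Complex.ofReal_ne_zero.mpr hv.ne'),
      ← Complex.ofReal_cpow hv.le, hsq_def, Real.sqrt_eq_rpow]
  rw [hpi, hRr, hvsplit]
  have hw0 : ((a:ℂ) + Complex.I*(b:ℂ)) ≠ 0 := by
    intro h
    apply hz0
    rw [hz]
    have hre : a = 0 := by have := congrArg Complex.re h; simpa using this
    have him : b = 0 := by have := congrArg Complex.im h; simpa using this
    simp [hre, him]
  have hconj : ((a:ℂ) + Complex.I*(b:ℂ)) * z = (R:ℂ)^2 := by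
    rw [hz, show ((R:ℂ))^2 = (((a^2+b^2 : ℝ)):ℂ) by push_cast [← hR2]; norm_num]
    push_cast
    linear_combination (-(b:ℂ)^2) * Complex.I_sq
  have hAIB : (((a/sq : ℝ)):ℂ) + Complex.I * ((nj * sq : ℝ):ℂ)
      = ((a:ℂ) + Complex.I*(b:ℂ)) / (sq:ℂ) := by
    have hsqC : ((sq:ℝ):ℂ)^2 = (vj:ℂ) := by exact_mod_cast congrArg Complex.ofReal hsq2
    have hsqC0 : ((sq:ℝ):ℂ) ≠ 0 := Complex.ofReal_ne_zero.mpr hsq.ne'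
    push_cast
    field_simp
    rw [hb_def]
    push_cast
    linear_combination Complex.I * (nj:ℂ) * hsqC
  rw [hAIB]
  have hz2 : z = (R:ℂ)^2 / ((a:ℂ) + Complex.I*(b:ℂ)) := by
    field_simp
    linear_combination hconj
  rw [hz2]
  have hP0 : ((Real.pi:ℝ):ℂ)^(1+s/2) ≠ 0 := by
    rw [Ne, Complex.cpow_eq_zero_iff]
    simp [Real.pi_ne_zero]
  have hRs0 : (R:ℂ)^s ≠ 0 := by
    rw [Ne, Complex.cpow_eq_zero_iff]
    simp [hR.ne']
  have hRC0 : (R:ℂ) ≠ 0 := Complex.ofReal_ne_zero.mpr hR.ne'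
  have hsqC0 : ((sq:ℝ):ℂ) ≠ 0 := Complex.ofReal_ne_zero.mpr hsq.ne'
  field_simp [hw0, hP0, hRs0, hRC0, hsqC0]
  linear_combination (-((vj:ℂ) ^ ((1 + s) / 2) * Complex.Gamma ((2 + s) / 2))) * Complex.I_sq


open Set in
/-- The archimedean zeta integral computation (Lemma 2.1). -/
theorem archimedean_zeta_integral
    (N : ℕ) (hN : 1 ≤ N)
    (φ : ℝ × ℝ → ℂ)
    (hφ : ∀ a b : ℝ,
      φ (a, b) = -Complex.I * Complex.exp (-Real.pi * (a ^ 2 + b ^ 2)) * (a + Complex.I * b))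
    (u v m n : Fin N → ℝ) (τ : Fin N → ℂ)
    (hτ : ∀ j, τ j = (u j : ℂ) + Complex.I * (v j : ℂ))
    (hv : ∀ j, 0 < v j)
    (hmn : ∀ j, (m j, n j) ≠ (0, 0))
    (s : ℂ) (hs : -2 < s.re) :
    (∀ j, IntegrableOn
      (fun t : ℝ =>
        φ ((m j - n j * u j) * t / Real.sqrt (v j), n j * Real.sqrt (v j) * t)
          * (t : ℂ) ^ (1 + s) / (t : ℂ)) (Set.Ioi 0)) ∧
    (∏ j, ∫ t in Set.Ioi (0 : ℝ),
        φ ((m j - n j * u j) * t / Real.sqrt (v j), n j * Real.sqrt (v j) * t)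
          * (t : ℂ) ^ (1 + s) / (t : ℂ))
      = Complex.Gamma (1 + s / 2) ^ N
        * ((2 * Complex.I * (Real.pi : ℂ) ^ (1 + s / 2)) ^ N)⁻¹
        * (∏ j, (v j : ℂ) ^ ((1 + s) / 2))
        / ((∏ j, ((m j : ℂ) - (n j : ℂ) * τ j))
            * ∏ j, ((‖(m j : ℂ) - (n j : ℂ) * τ j‖ : ℝ) : ℂ) ^ s) := by
  have hsq : ∀ j, 0 < Real.sqrt (v j) := fun j => Real.sqrt_pos.mpr (hv j)
  have hmn' : ∀ j, ¬(m j = 0 ∧ n j = 0) := by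
    intro j h
    exact hmn j (by rw [h.1, h.2])
  have hpos : ∀ j, 0 < ((m j - n j * u j)/Real.sqrt (v j))^2 + (n j * Real.sqrt (v j))^2 := by
    intro j
    by_cases hn : n j = 0
    · have hm : m j ≠ 0 := fun h => hmn' j ⟨h, hn⟩
      have : (m j - n j * u j)/Real.sqrt (v j) ≠ 0 := by
        rw [hn]; simp
        constructor
        · simpa [hn] using hm
        · exact (hsq j).ne'
      have h1 := pow_two_pos_of_ne_zero this
      nlinarith [sq_nonneg (n j * Real.sqrt (v j))]
    · have : n j * Real.sqrt (v j) ≠ 0 := mul_ne_zero hn (hsq j).ne'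
      have h1 := pow_two_pos_of_ne_zero this
      nlinarith [sq_nonneg ((m j - n j * u j)/Real.sqrt (v j))]
  have hrw : ∀ j, (fun t : ℝ =>
      φ ((m j - n j * u j) * t / Real.sqrt (v j), n j * Real.sqrt (v j) * t)
        * (t : ℂ) ^ (1 + s) / (t : ℂ)) =
      (fun t : ℝ =>
      φ (((m j - n j * u j) / Real.sqrt (v j)) * t, (n j * Real.sqrt (v j)) * t)
        * (t : ℂ) ^ (1 + s) / (t : ℂ)) := by
    intro j
    funext t
    rw [show (m j - n j * u j) * t / Real.sqrt (v j)
      = ((m j - n j * u j)/Real.sqrt (v j)) * t by ring]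
  have hkey := fun j => key φ hφ ((m j - n j * u j)/Real.sqrt (v j))
    (n j * Real.sqrt (v j)) (hpos j) s hs
  constructor
  · intro j
    rw [hrw j]
    exact (hkey j).1
  · have hval : ∀ j ∈ Finset.univ, (∫ t in Set.Ioi (0 : ℝ),
        φ ((m j - n j * u j) * t / Real.sqrt (v j), n j * Real.sqrt (v j) * t)
          * (t : ℂ) ^ (1 + s) / (t : ℂ))
        = Complex.Gamma (1 + s / 2) * (2 * Complex.I * (Real.pi : ℂ) ^ (1 + s / 2))⁻¹
            * (v j : ℂ) ^ ((1 + s) / 2)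
          / (((m j : ℂ) - (n j : ℂ) * τ j)
              * ((‖(m j : ℂ) - (n j : ℂ) * τ j‖ : ℝ) : ℂ) ^ s) := by
      intro j _
      have := (hkey j).2
      rw [hrw j]
      rw [this, hτ j]
      exact keyval (m j) (n j) (u j) (v j) (hv j) (hmn' j) s
    rw [Finset.prod_congr rfl hval]
    simp only [div_eq_mul_inv, Finset.prod_mul_distrib, Finset.prod_const, Finset.card_univ,
      Fintype.card_fin, Finset.prod_inv_distrib, mul_inv, inv_pow]
    ring
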